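/- For any S̃ ∈ G₁, y ∈ G₂ and c̃, r̃, v, bS, bc, br ∈ ZMod q, define 𝔥₁ := e(h₁, f₂)⁻¹, 𝔥₂ := e(g₁, f₂)⁻¹, 𝔷₂ := e(S̃, y·f₂^{c̃}) · e(f₁·g₁^v·h₁^{r̃}, f₂)⁻¹, 𝔤₁ := e(S̃, f₂) and 𝔤₂ := e(g₁, y·f₂^{c̃}). Then the following are equivalent: (i) e(S̃ · g₁^{−bS}, y · f₂^{c̃ − bc}) = e(f₁ · g₁^v · h₁^{r̃ − br}, f₂); (ii) 𝔷₂ = 𝔤₁^{bc} · 𝔤₂^{bS} · 𝔥₁^{br} · 𝔥₂^{bS·bc}. (This is the pairing-algebra equivalence of Equation (1) underlying the distributed proof of knowledge of a BBS+ signature.) -/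
import Mathlib

section aux

variable {q : ℕ} [NeZero q] {G : Type*} [CommGroup G]

private lemma pow_val_mod (hG : ∀ x : G, x ^ q = 1) (x : G) (k : ℕ) :
    x ^ (k % q) = x ^ k := by
  conv_rhs => rw [← Nat.mod_add_div k q, pow_add, pow_mul, hG, one_pow, mul_one]

private lemma pow_val_add (hG : ∀ x : G, x ^ q = 1) (x : G) (a b : ZMod q) :
    x ^ (a + b).val = x ^ a.val * x ^ b.val := by
  rw [ZMod.val_add, pow_val_mod hG, pow_add]

private lemma pow_val_neg (hG : ∀ x : G, x ^ q = 1) (x : G) (a : ZMod q) :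
    x ^ (-a).val = (x ^ a.val)⁻¹ := by
  have h : x ^ (-a + a).val = x ^ (-a).val * x ^ a.val := pow_val_add hG x _ _
  rw [neg_add_cancel] at h
  simp only [ZMod.val_zero, pow_zero] at h
  exact eq_inv_of_mul_eq_one_left h.symm

private lemma pow_val_sub (hG : ∀ x : G, x ^ q = 1) (x : G) (a b : ZMod q) :
    x ^ (a - b).val = x ^ a.val * (x ^ b.val)⁻¹ := by
  rw [sub_eq_add_neg, pow_val_add hG, pow_val_neg hG]

private lemma pow_val_mul (hG : ∀ x : G, x ^ q = 1) (x : G) (a b : ZMod q) :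
    x ^ (a * b).val = (x ^ a.val) ^ b.val := by
  rw [ZMod.val_mul, pow_val_mod hG, pow_mul]

end aux

/-- The pairing-algebra equivalence underlying the distributed proof of
knowledge of a BBS+ signature: unblinding `(S̃, c̃, r̃)` by `(bS, bc, br)`
passes BBS+ verification iff `𝔷₂ = 𝔤₁^{bc}·𝔤₂^{bS}·𝔥₁^{br}·𝔥₂^{bS·bc}`. -/
theorem bbs_plus_dpk_equation_equivalence
    {q : ℕ} (hq : q.Prime)
    {G₁ G₂ GT : Type*} [CommGroup G₁] [CommGroup G₂] [CommGroup GT]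
    (hG₁ : ∀ x : G₁, x ^ q = 1) (hG₂ : ∀ x : G₂, x ^ q = 1)
    (hGT : ∀ x : GT, x ^ q = 1)
    (g₁ h₁ f₁ : G₁) (g₂ f₂ : G₂)
    (e : G₁ → G₂ → GT)
    (he_left : ∀ (a a' : G₁) (b : G₂), e (a * a') b = e a b * e a' b)
    (he_right : ∀ (a : G₁) (b b' : G₂), e a (b * b') = e a b * e a b')
    (Stilde : G₁) (y : G₂) (ctilde rtilde v bS bc br : ZMod q) :
    (e (Stilde * g₁ ^ (-bS).val) (y * f₂ ^ (ctilde - bc).val) =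
        e (f₁ * g₁ ^ v.val * h₁ ^ (rtilde - br).val) f₂)
      ↔
    (e Stilde (y * f₂ ^ ctilde.val) *
        (e (f₁ * g₁ ^ v.val * h₁ ^ rtilde.val) f₂)⁻¹ =
      (e Stilde f₂) ^ bc.val * (e g₁ (y * f₂ ^ ctilde.val)) ^ bS.val *
        ((e h₁ f₂)⁻¹) ^ br.val * ((e g₁ f₂)⁻¹) ^ (bS * bc).val) := by
  haveI : NeZero q := ⟨hq.ne_zero⟩
  -- bilinearity on powers
  have he_one_left : ∀ b : G₂, e 1 b = 1 := by
    intro b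
    have := he_left 1 1 b
    rw [mul_one] at this
    exact left_eq_mul.mp this
  have he_one_right : ∀ a : G₁, e a 1 = 1 := by
    intro a
    have := he_right a 1 1
    rw [mul_one] at this
    exact left_eq_mul.mp this
  have he_pow_left : ∀ (a : G₁) (b : G₂) (n : ℕ), e (a ^ n) b = (e a b) ^ n := by
    intro a b n
    induction n with
    | zero => simp [he_one_left]
    | succ n ih => rw [pow_succ, he_left, ih, pow_succ]
  have he_pow_right : ∀ (a : G₁) (b : G₂) (n : ℕ), e a (b ^ n) = (e a b) ^ n := by
    intro a b n
    induction n with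
    | zero => simp [he_one_right]
    | succ n ih => rw [pow_succ, he_right, ih, pow_succ]
  -- key identity: the two sides of (i) and (ii) differ by the same group element
  have key :
      e (Stilde * g₁ ^ (-bS).val) (y * f₂ ^ (ctilde - bc).val) *
          (e (f₁ * g₁ ^ v.val * h₁ ^ (rtilde - br).val) f₂)⁻¹ =
      (e Stilde (y * f₂ ^ ctilde.val) *
          (e (f₁ * g₁ ^ v.val * h₁ ^ rtilde.val) f₂)⁻¹) *
        ((e Stilde f₂) ^ bc.val * (e g₁ (y * f₂ ^ ctilde.val)) ^ bS.val *
          ((e h₁ f₂)⁻¹) ^ br.val * ((e g₁ f₂)⁻¹) ^ (bS * bc).val)⁻¹ := by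
    simp only [he_left, he_right, he_pow_left, he_pow_right,
      pow_val_sub hGT, pow_val_neg hGT, pow_val_mul hGT,
      mul_pow, inv_pow, mul_inv_rev, inv_inv]
    rw [pow_right_comm (e g₁ f₂) bc.val bS.val]
    simp only [mul_comm, mul_left_comm, mul_assoc, inv_inv]
  constructor
  · intro h
    have h1 : e (Stilde * g₁ ^ (-bS).val) (y * f₂ ^ (ctilde - bc).val) *
        (e (f₁ * g₁ ^ v.val * h₁ ^ (rtilde - br).val) f₂)⁻¹ = 1 := by
      rw [h, mul_inv_cancel]
    rw [key] at h1
    exact mul_inv_eq_one.mp h1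
  · intro h
    have h1 : e Stilde (y * f₂ ^ ctilde.val) *
        (e (f₁ * g₁ ^ v.val * h₁ ^ rtilde.val) f₂)⁻¹ *
        ((e Stilde f₂) ^ bc.val * (e g₁ (y * f₂ ^ ctilde.val)) ^ bS.val *
          ((e h₁ f₂)⁻¹) ^ br.val * ((e g₁ f₂)⁻¹) ^ (bS * bc).val)⁻¹ = 1 := by
      rw [h, mul_inv_cancel]
    rw [← key] at h1
    exact mul_inv_eq_one.mp h1
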